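/- The number of forests on vertex set [n] consisting of k rooted trees with a prescribed set of k roots equals k · n^{n-k-1}. -/

import Mathlib

open Finset Function
open scoped Classical
set_option linter.unusedSectionVars false

section Funcs
variable {V : Type*} [Fintype V] [DecidableEq V]

def IsGood (S : Finset V) (f : V → V) : Prop :=
  (∀ v ∉ S, f v = v) ∧ ∀ v, ∃ j, f^[j] v ∉ S


noncomputable def gsteps (S : Finset V) (f : V → V) (v : V) : ℕ :=
  if h : ∃ j, f^[j] v ∉ S then Nat.find h else 0

noncomputable def glim (S : Finset V) (f : V → V) (v : V) : V := f^[gsteps S f v] v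

variable {S : Finset V} {f : V → V}

lemma gsteps_eq_find (h : ∃ j, f^[j] v ∉ S) : gsteps S f v = Nat.find h := dif_pos h

lemma gsteps_spec (hf : ∀ v, ∃ j, f^[j] v ∉ S) (v : V) : f^[gsteps S f v] v ∉ S := by
  rw [gsteps_eq_find (hf v)]; exact Nat.find_spec (hf v)

lemma glim_not_mem (hf : ∀ v, ∃ j, f^[j] v ∉ S) (v : V) : glim S f v ∉ S := gsteps_spec hf v

lemma gsteps_eq_zero (hv : v ∉ S) : gsteps S f v = 0 := by
  rcases em (∃ j, f^[j] v ∉ S) with h | h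
  · rw [gsteps_eq_find h]; exact Nat.find_eq_zero h |>.2 (by simpa using hv)
  · rw [gsteps, dif_neg h]

lemma glim_eq_self (hv : v ∉ S) : glim S f v = v := by
  rw [glim, gsteps_eq_zero hv]; rfl

lemma gsteps_succ (hf : ∀ v, ∃ j, f^[j] v ∉ S) (hv : v ∈ S) :
    gsteps S f (f v) + 1 = gsteps S f v := by
  have h := hf v
  have h' := hf (f v)
  rw [gsteps_eq_find h, gsteps_eq_find h']
  have h0 : Nat.find h ≠ 0 := by
    intro h0
    have := Nat.find_spec h
    rw [h0] at this
    exact this hv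
  have le1 : Nat.find h' ≤ Nat.find h - 1 := by
    apply Nat.find_le
    rw [← Function.iterate_succ_apply]
    have heq : (Nat.find h - 1).succ = Nat.find h := by omega
    rw [heq]
    exact Nat.find_spec h
  have le2 : Nat.find h ≤ Nat.find h' + 1 := by
    apply Nat.find_le
    rw [Function.iterate_succ_apply]
    exact Nat.find_spec h'
  omega

lemma glim_f (hf : ∀ v, ∃ j, f^[j] v ∉ S) (hloc : ∀ v ∉ S, f v = v) (v : V) :
    glim S f (f v) = glim S f v := by
  by_cases hv : v ∈ S
  · rw [glim, glim, ← gsteps_succ hf hv, Function.iterate_succ_apply]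
  · rw [hloc v hv]

lemma glim_iterate (hf : ∀ v, ∃ j, f^[j] v ∉ S) (hloc : ∀ v ∉ S, f v = v) (v : V) (j : ℕ) :
    glim S f (f^[j] v) = glim S f v := by
  induction j with
  | zero => rfl
  | succ j ih => rw [Function.iterate_succ_apply', glim_f hf hloc, ih]

lemma exists_iterate_eq_glim (v : V) : ∃ j, f^[j] v = glim S f v := ⟨_, rfl⟩

lemma glim_eq_iff (hf : ∀ v, ∃ j, f^[j] v ∉ S) (hloc : ∀ v ∉ S, f v = v) {v r : V} (hr : r ∉ S) :
    glim S f v = r ↔ ∃ j, f^[j] v = r := by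
  constructor
  · intro h; exact ⟨_, h⟩
  · rintro ⟨j, hj⟩
    rw [← glim_iterate hf hloc v j, hj, glim_eq_self hr]

lemma apply_ne_self (hf : ∀ v, ∃ j, f^[j] v ∉ S) (hv : v ∈ S) : f v ≠ v := by
  intro h
  obtain ⟨j, hj⟩ := hf v
  rw [Function.iterate_fixed h] at hj
  exact hj hv



noncomputable def GoodF (S : Finset V) : Finset (V → V) := univ.filter (IsGood S)

lemma mem_GoodF {S : Finset V} {f : V → V} : f ∈ GoodF S ↔ IsGood S f := by
  simp [GoodF]

noncomputable def basin (S : Finset V) (f : V → V) (r : V) : Finset V :=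
  univ.filter (fun v => glim S f v = r)

variable {S : Finset V} {f : V → V} {r s₀ : V}

lemma GoodF_empty : GoodF (∅ : Finset V) = {id} := by
  ext f
  simp only [mem_GoodF, IsGood, mem_singleton]
  constructor
  · rintro ⟨h1, -⟩
    funext x
    simpa using h1 x (by simp)
  · rintro rfl
    exact ⟨fun v _ => rfl, fun v => ⟨0, by simp⟩⟩

/-- basins partition the vertex set -/
lemma sum_basin_card (hf : IsGood S f) :
    ∑ r ∈ Sᶜ, (basin S f r).card = Fintype.card V := by
  rw [← Finset.card_univ]
  exact (Finset.card_eq_sum_card_fiberwise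
    (f := fun v => glim S f v) (t := Sᶜ)
    (fun v _ => Finset.mem_compl.2 (glim_not_mem hf.2 v))).symm

lemma basin_card_le : (basin S f r).card ≤ Fintype.card V := by
  rw [← Finset.card_univ]; exact Finset.card_le_card (Finset.subset_univ _)

section Conj
variable (hr : r ∉ S) (hs : s₀ ∉ S)

private noncomputable def σ (r s₀ : V) : Equiv.Perm V := Equiv.swap r s₀

lemma sigma_sigma (r s₀ x : V) : σ r s₀ (σ r s₀ x) = x := Equiv.swap_apply_self r s₀ x

lemma sigma_left (r s₀ : V) : σ r s₀ r = s₀ := Equiv.swap_apply_left r s₀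

lemma sigma_right (r s₀ : V) : σ r s₀ s₀ = r := Equiv.swap_apply_right r s₀

lemma sigma_fix (hr : r ∉ S) (hs : s₀ ∉ S) {x : V} (hx : x ∈ S) : σ r s₀ x = x :=
  Equiv.swap_apply_of_ne_of_ne (fun h => hr (h ▸ hx)) (fun h => hs (h ▸ hx))

lemma sigma_mem_iff (hr : r ∉ S) (hs : s₀ ∉ S) {x : V} : σ r s₀ x ∈ S ↔ x ∈ S := by
  constructor
  · intro h
    have h2 : σ r s₀ (σ r s₀ x) = σ r s₀ x := sigma_fix hr hs h
    have h3 : σ r s₀ (σ r s₀ x) = x := sigma_sigma r s₀ x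
    rw [h3] at h2; rwa [h2]
  · intro h; rw [sigma_fix hr hs h]; exact h

lemma conj_iterate (f : V → V) (j : ℕ) (x : V) :
    (fun y => σ r s₀ (f (σ r s₀ y)))^[j] x = σ r s₀ (f^[j] (σ r s₀ x)) := by
  induction j generalizing x with
  | zero => exact (sigma_sigma r s₀ x).symm
  | succ j ih =>
      rw [Function.iterate_succ_apply, Function.iterate_succ_apply]
      rw [ih (σ r s₀ (f (σ r s₀ x)))]
      congr 2
      exact sigma_sigma r s₀ _

lemma conj_isGood (hr : r ∉ S) (hs : s₀ ∉ S) (hf : IsGood S f) :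
    IsGood S (fun y => σ r s₀ (f (σ r s₀ y))) := by
  constructor
  · intro v hv
    have h1 : σ r s₀ v ∉ S := fun h => hv ((sigma_mem_iff hr hs).1 h)
    show σ r s₀ (f (σ r s₀ v)) = v
    rw [hf.1 _ h1]
    exact sigma_sigma r s₀ v
  · intro v
    obtain ⟨j, hj⟩ := hf.2 (σ r s₀ v)
    refine ⟨j, ?_⟩
    rw [conj_iterate]
    intro h
    exact hj ((sigma_mem_iff hr hs).1 h)

lemma conj_glim (hr : r ∉ S) (hs : s₀ ∉ S) (hf : IsGood S f) (v : V) :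
    glim S (fun y => σ r s₀ (f (σ r s₀ y))) v = σ r s₀ (glim S f (σ r s₀ v)) := by
  have hg := conj_isGood hr hs hf
  have hlim : glim S f (σ r s₀ v) ∉ S := glim_not_mem hf.2 _
  have hlim2 : σ r s₀ (glim S f (σ r s₀ v)) ∉ S := fun h => hlim ((sigma_mem_iff hr hs).1 h)
  rw [glim_eq_iff hg.2 hg.1 hlim2]
  obtain ⟨j, hj⟩ := exists_iterate_eq_glim (S := S) (f := f) (σ r s₀ v)
  exact ⟨j, by rw [conj_iterate, hj]⟩

lemma conj_basin_card (hr : r ∉ S) (hs : s₀ ∉ S) (hf : IsGood S f) (x : V) :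
    (basin S (fun y => σ r s₀ (f (σ r s₀ y))) x).card = (basin S f (σ r s₀ x)).card := by
  apply Finset.card_bij' (fun v _ => σ r s₀ v) (fun v _ => σ r s₀ v)
  · intro a ha
    simp only [basin, mem_filter, mem_univ, true_and] at ha ⊢
    rw [conj_glim hr hs hf] at ha
    have := congrArg (σ r s₀) ha
    rwa [sigma_sigma] at this
  · intro a ha
    simp only [basin, mem_filter, mem_univ, true_and] at ha ⊢
    rw [conj_glim hr hs hf, sigma_sigma, ha, sigma_sigma]
  · intro a _; exact sigma_sigma r s₀ a
  · intro a _; exact sigma_sigma r s₀ a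

lemma sum_basin_symm (hr : r ∉ S) (hs : s₀ ∉ S) :
    ∑ f ∈ GoodF S, (basin S f r).card = ∑ f ∈ GoodF S, (basin S f s₀).card := by
  apply Finset.sum_bij' (fun f _ => fun y => σ r s₀ (f (σ r s₀ y)))
    (fun f _ => fun y => σ r s₀ (f (σ r s₀ y)))
  · intro f hf
    exact mem_GoodF.2 (conj_isGood hr hs (mem_GoodF.1 hf))
  · intro f hf
    exact mem_GoodF.2 (conj_isGood hr hs (mem_GoodF.1 hf))
  · intro f _; funext y; rw [sigma_sigma, sigma_sigma]
  · intro f _; funext y; rw [sigma_sigma, sigma_sigma]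
  · intro f hf
    rw [conj_basin_card hr hs (mem_GoodF.1 hf), sigma_right]
end Conj
end Funcs

section Update
variable {V : Type*} [Fintype V] [DecidableEq V]
variable {S : Finset V} {f f' : V → V} {s₀ : V}

lemma iterate_agree {f g : V → V} {s₀ : V} (hfg : ∀ x, x ≠ s₀ → f x = g x) (v : V) (j : ℕ)
    (hj : ∀ i < j, f^[i] v ≠ s₀) : f^[j] v = g^[j] v := by
  induction j with
  | zero => rfl
  | succ j ih =>
      rw [Function.iterate_succ_apply', Function.iterate_succ_apply',
        ← ih (fun i hi => hj i (by omega))]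
      exact hfg _ (hj j (by omega))

lemma isGood_update_erase (hf : IsGood S f) (hs : s₀ ∈ S) :
    IsGood (S.erase s₀) (update f s₀ s₀) := by
  constructor
  · intro v hv
    by_cases h : v = s₀
    · subst h; simp
    · rw [update_of_ne h]
      exact hf.1 v (fun hvS => hv (Finset.mem_erase.2 ⟨h, hvS⟩))
  · have key : ∀ N w, gsteps S f w ≤ N → ∃ j, (update f s₀ s₀)^[j] w ∉ S.erase s₀ := by
      intro N
      induction N with
      | zero =>
          intro w hw
          refine ⟨0, ?_⟩
          simp only [Function.iterate_zero, id_eq]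
          intro hmem
          have hwS : w ∈ S := Finset.mem_of_mem_erase hmem
          have := gsteps_succ hf.2 hwS
          omega
      | succ N ih =>
          intro w hw
          by_cases hmem : w ∈ S.erase s₀
          · have hwS : w ∈ S := Finset.mem_of_mem_erase hmem
            have hne : w ≠ s₀ := Finset.ne_of_mem_erase hmem
            have hst := gsteps_succ hf.2 hwS
            obtain ⟨j, hj⟩ := ih (f w) (by omega)
            refine ⟨j + 1, ?_⟩
            rwa [Function.iterate_succ_apply, update_of_ne hne]
          · exact ⟨0, hmem⟩
    exact fun w => key _ w le_rfl

lemma update_self_not_lim (hf : IsGood S f) (hs : s₀ ∈ S) :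
    glim (S.erase s₀) (update f s₀ s₀) (f s₀) ≠ s₀ := by
  have hg := isGood_update_erase hf hs
  have hs' : s₀ ∉ S.erase s₀ := Finset.notMem_erase s₀ S
  intro heq
  obtain ⟨j, hj⟩ := (glim_eq_iff hg.2 hg.1 hs').1 heq
  have hex : ∃ j, (update f s₀ s₀)^[j] (f s₀) = s₀ := ⟨j, hj⟩
  have hmin : ∀ i < Nat.find hex, (update f s₀ s₀)^[i] (f s₀) ≠ s₀ :=
    fun i hi => Nat.find_min hex hi
  have hagree : (update f s₀ s₀)^[Nat.find hex] (f s₀) = f^[Nat.find hex] (f s₀) :=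
    iterate_agree (fun x hx => update_of_ne hx s₀ f) _ _ hmin
  have hcyc1 : f^[Nat.find hex + 1] s₀ = s₀ := by
    rw [Function.iterate_succ_apply, ← hagree]
    exact Nat.find_spec hex
  obtain ⟨i, hi⟩ := hf.2 s₀
  have habs : ∀ l, i ≤ l → f^[l] s₀ = f^[i] s₀ := by
    intro l hl
    have hl2 : l = (l - i) + i := by omega
    rw [hl2, Function.iterate_add_apply]
    exact Function.iterate_fixed (hf.1 _ hi) _
  have hcyc : ∀ m, f^[(Nat.find hex + 1) * m] s₀ = s₀ := by
    intro m
    rw [Function.iterate_mul]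
    exact Function.iterate_fixed hcyc1 m
  have h1 : f^[(Nat.find hex + 1) * (i + 1)] s₀ = s₀ := hcyc (i + 1)
  have h2 : f^[(Nat.find hex + 1) * (i + 1)] s₀ = f^[i] s₀ := by
    apply habs
    nlinarith
  rw [h1] at h2
  rw [← h2] at hi
  exact hi hs

lemma isGood_update_insert (hf : IsGood (S.erase s₀) f') (hs : s₀ ∈ S)
    {v : V} (hv : glim (S.erase s₀) f' v ≠ s₀) :
    IsGood S (update f' s₀ v) := by
  have hs' : s₀ ∉ S.erase s₀ := Finset.notMem_erase s₀ S
  constructor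
  · intro w hw
    have hne : w ≠ s₀ := fun h => hw (h ▸ hs)
    rw [update_of_ne hne]
    exact hf.1 w (fun h => hw (Finset.mem_of_mem_erase h))
  · have K : ∀ N w, gsteps (S.erase s₀) f' w ≤ N → (∀ i, f'^[i] w ≠ s₀) →
        ∃ j, (update f' s₀ v)^[j] w ∉ S := by
      intro N
      induction N with
      | zero =>
          intro w hw hall
          refine ⟨0, ?_⟩
          simp only [Function.iterate_zero, id_eq]
          intro hwS
          have hwe : w ∈ S.erase s₀ := Finset.mem_erase.2 ⟨by simpa using hall 0, hwS⟩
          have := gsteps_succ hf.2 hwe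
          omega
      | succ N ih =>
          intro w hw hall
          by_cases hmem : w ∈ S
          · have hne : w ≠ s₀ := by simpa using hall 0
            have hwe : w ∈ S.erase s₀ := Finset.mem_erase.2 ⟨hne, hmem⟩
            have hst := gsteps_succ hf.2 hwe
            obtain ⟨j, hj⟩ := ih (f' w) (by omega) (fun i => by
              have h := hall (i + 1)
              rwa [Function.iterate_succ_apply] at h)
            refine ⟨j + 1, ?_⟩
            rwa [Function.iterate_succ_apply, update_of_ne hne]
          · exact ⟨0, hmem⟩
    intro w
    by_cases hall : ∀ i, f'^[i] w ≠ s₀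
    · exact K _ w le_rfl hall
    · push_neg at hall
      have hex : ∃ i, f'^[i] w = s₀ := hall
      have hmin : ∀ i < Nat.find hex, f'^[i] w ≠ s₀ := fun i hi => Nat.find_min hex hi
      have hagree : f'^[Nat.find hex] w = (update f' s₀ v)^[Nat.find hex] w :=
        iterate_agree (fun x hx => (update_of_ne hx v f').symm) _ _ hmin
      have hstep : (update f' s₀ v)^[Nat.find hex + 1] w = v := by
        rw [Function.iterate_succ_apply', ← hagree, Nat.find_spec hex, update_self]
      have hvall : ∀ i, f'^[i] v ≠ s₀ := by
        intro i hi
        exact hv ((glim_eq_iff hf.2 hf.1 hs').2 ⟨i, hi⟩)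
      obtain ⟨j, hj⟩ := K _ v le_rfl hvall
      refine ⟨j + (Nat.find hex + 1), ?_⟩
      rw [Function.iterate_add_apply, hstep]
      exact hj

lemma card_fiber (hs : s₀ ∈ S) {f' : V → V} (hf' : IsGood (S.erase s₀) f') :
    ((GoodF S).filter (fun f => update f s₀ s₀ = f')).card
      = Fintype.card V - (basin (S.erase s₀) f' s₀).card := by
  have hs' : s₀ ∉ S.erase s₀ := Finset.notMem_erase s₀ S
  rw [← Finset.card_compl (basin (S.erase s₀) f' s₀)]
  apply Finset.card_bij' (fun f _ => f s₀) (fun v _ => update f' s₀ v)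
  · intro f hf
    simp only [Finset.mem_filter] at hf
    obtain ⟨hfG, hup⟩ := hf
    rw [Finset.mem_compl]
    simp only [basin, mem_filter, mem_univ, true_and]
    rw [← hup]
    exact update_self_not_lim (mem_GoodF.1 hfG) hs
  · intro v hv
    rw [Finset.mem_compl] at hv
    simp only [basin, mem_filter, mem_univ, true_and] at hv
    simp only [Finset.mem_filter]
    refine ⟨mem_GoodF.2 (isGood_update_insert hf' hs hv), ?_⟩
    funext x
    by_cases hx : x = s₀
    · rw [hx, update_self]; exact (hf'.1 s₀ hs').symm
    · rw [update_of_ne hx, update_of_ne hx]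
  · intro f hf
    simp only [Finset.mem_filter] at hf
    funext x
    by_cases hx : x = s₀
    · rw [hx, update_self]
    · rw [update_of_ne hx, ← hf.2, update_of_ne hx]
  · intro v hv
    rw [update_self]

lemma card_GoodF_rec (hs : s₀ ∈ S) :
    (GoodF S).card
      = ∑ f' ∈ GoodF (S.erase s₀), (Fintype.card V - (basin (S.erase s₀) f' s₀).card) := by
  rw [Finset.card_eq_sum_card_fiberwise (f := fun f => update f s₀ s₀)
    (t := GoodF (S.erase s₀)) (fun f hf => mem_GoodF.2 (isGood_update_erase (mem_GoodF.1 hf) hs))]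
  exact Finset.sum_congr rfl (fun f' hf' => card_fiber hs (mem_GoodF.1 hf'))

end Update

section Count
variable {V : Type*} [Fintype V] [DecidableEq V]

lemma main_rec {S : Finset V} {s₀ : V} (hs : s₀ ∈ S) :
    (Fintype.card V - S.card + 1) * (GoodF S).card
      = (Fintype.card V - S.card) * (Fintype.card V * (GoodF (S.erase s₀)).card) := by
  set n := Fintype.card V with hn
  set S' := S.erase s₀ with hS'
  have hs' : s₀ ∉ S' := Finset.notMem_erase s₀ S
  set A := (GoodF S).card with hA0
  set A' := (GoodF S').card with hA'0
  set B := ∑ f' ∈ GoodF S', (basin S' f' s₀).card with hB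
  have hmle : S.card ≤ n := Finset.card_le_univ S
  have hm1 : 1 ≤ S.card := Finset.card_pos.2 ⟨s₀, hs⟩
  have hA : A + B = n * A' := by
    have h1 : A = ∑ f' ∈ GoodF S', (n - (basin S' f' s₀).card) := card_GoodF_rec hs
    rw [h1, hB, ← Finset.sum_add_distrib]
    have h2 : ∀ f' ∈ GoodF S', n - (basin S' f' s₀).card + (basin S' f' s₀).card = n :=
      fun f' _ => Nat.sub_add_cancel basin_card_le
    rw [Finset.sum_congr rfl h2, Finset.sum_const, smul_eq_mul, mul_comm]
  have hcompl : S'ᶜ.card = n - S.card + 1 := by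
    rw [Finset.card_compl, hS', Finset.card_erase_of_mem hs]
    omega
  have hBsum : (n - S.card + 1) * B = n * A' := by
    have h1 : ∑ r ∈ S'ᶜ, ∑ f' ∈ GoodF S', (basin S' f' r).card = S'ᶜ.card * B := by
      rw [Finset.sum_congr rfl (fun r hr => sum_basin_symm (Finset.mem_compl.1 hr) hs'),
        Finset.sum_const, smul_eq_mul]
    have h2 : ∑ r ∈ S'ᶜ, ∑ f' ∈ GoodF S', (basin S' f' r).card = A' * n := by
      rw [Finset.sum_comm,
        Finset.sum_congr rfl (fun f' hf' => sum_basin_card (mem_GoodF.1 hf')),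
        Finset.sum_const, smul_eq_mul]
    rw [← hcompl, ← h1, h2, mul_comm]
  have e1 : (n - S.card + 1) * A + (n - S.card + 1) * B = (n - S.card + 1) * (n * A') := by
    rw [← Nat.mul_add, hA]
  rw [hBsum] at e1
  have e2 : (n - S.card + 1) * (n * A') = (n - S.card) * (n * A') + n * A' := by ring
  rw [e2] at e1
  exact Nat.add_right_cancel e1

lemma card_GoodF_eq : ∀ (m : ℕ) (S : Finset V), S.card = m → S.Nonempty →
    (GoodF S).card = (Fintype.card V - m) * Fintype.card V ^ (m - 1) := by
  intro m
  induction m with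
  | zero =>
      intro S h hne
      rw [Finset.card_eq_zero] at h
      subst h
      exact absurd hne (by simp)
  | succ m ih =>
      intro S hcard hne
      obtain ⟨s₀, hs₀⟩ := hne
      set n := Fintype.card V with hn
      have hrec := main_rec hs₀
      rw [hcard] at hrec
      have hmle : m + 1 ≤ n := hcard ▸ Finset.card_le_univ S
      have hcerase : (S.erase s₀).card = m := by rw [Finset.card_erase_of_mem hs₀, hcard]; omega
      have hc : n - (m + 1) + 1 = n - m := by omega
      rw [hc] at hrec
      by_cases hm : m = 0
      · subst hm
        have hS' : S.erase s₀ = ∅ := Finset.card_eq_zero.1 hcerase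
        rw [hS', GoodF_empty, Finset.card_singleton, mul_one] at hrec
        simp only [Nat.sub_zero] at hrec
        have hpos : 0 < n := by omega
        have hval : (GoodF S).card = n - 1 := by
          apply Nat.eq_of_mul_eq_mul_left hpos
          rw [hrec]; ring
        rw [hval]
        simp
      · have hne' : (S.erase s₀).Nonempty := Finset.card_pos.1 (by omega)
        have hA' := ih (S.erase s₀) hcerase hne'
        rw [hA'] at hrec
        have hpow : n * ((n - m) * n ^ (m - 1)) = (n - m) * n ^ m := by
          rw [← mul_assoc, mul_comm n (n - m), mul_assoc]
          congr 1
          rw [← pow_succ']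
          congr 1
          omega
        rw [hpow] at hrec
        have hpos : 0 < n - m := by omega
        have hexp : m + 1 - 1 = m := by omega
        rw [hexp]
        apply Nat.eq_of_mul_eq_mul_left hpos
        rw [hrec]
        ring

end Count

section Graph
open SimpleGraph
variable {V : Type*} [Fintype V] [DecidableEq V]

def GraphOf (f : V → V) : SimpleGraph V := SimpleGraph.fromRel (fun v w => f v = w)

lemma graphOf_adj {f : V → V} {v w : V} :
    (GraphOf f).Adj v w ↔ v ≠ w ∧ (f v = w ∨ f w = v) := by
  simp [GraphOf]

variable {R : Finset V} {f : V → V}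

lemma adj_apply (hf : IsGood Rᶜ f) {v : V} (hv : v ∈ Rᶜ) : (GraphOf f).Adj v (f v) :=
  graphOf_adj.2 ⟨(apply_ne_self hf.2 hv).symm, Or.inl rfl⟩

lemma reach_glim (hf : IsGood Rᶜ f) (v : V) : (GraphOf f).Reachable v (glim Rᶜ f v) := by
  have key : ∀ N v, gsteps Rᶜ f v ≤ N → (GraphOf f).Reachable v (glim Rᶜ f v) := by
    intro N
    induction N with
    | zero =>
        intro v hv
        by_cases h : v ∈ Rᶜ
        · exact absurd (gsteps_succ hf.2 h) (by omega)
        · rw [glim_eq_self h]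
    | succ N ih =>
        intro v hv
        by_cases h : v ∈ Rᶜ
        · have hstep := gsteps_succ hf.2 h
          have h1 : (GraphOf f).Reachable (f v) (glim Rᶜ f (f v)) := ih (f v) (by omega)
          rw [glim_f hf.2 hf.1] at h1
          exact (adj_apply hf h).reachable.trans h1
        · rw [glim_eq_self h]
  exact key _ v le_rfl

lemma adj_glim (hf : IsGood Rᶜ f) {v w : V} (h : (GraphOf f).Adj v w) :
    glim Rᶜ f v = glim Rᶜ f w := by
  rcases graphOf_adj.1 h with ⟨hne, h1 | h2⟩
  · rw [← h1, glim_f hf.2 hf.1]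
  · rw [← h2, glim_f hf.2 hf.1]

lemma reach_glim_eq (hf : IsGood Rᶜ f) {v w : V} (h : (GraphOf f).Reachable v w) :
    glim Rᶜ f v = glim Rᶜ f w := by
  obtain ⟨p⟩ := h
  induction p with
  | nil => rfl
  | cons hadj q ih => exact (adj_glim hf hadj).trans ih

lemma graphOf_existsUnique (hf : IsGood Rᶜ f) (v : V) :
    ∃! r : V, r ∈ R ∧ (GraphOf f).Reachable v r := by
  refine ⟨glim Rᶜ f v, ⟨by simpa using glim_not_mem hf.2 v, reach_glim hf v⟩, ?_⟩
  rintro r' ⟨hr', hre⟩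
  have h1 : glim Rᶜ f v = glim Rᶜ f r' := reach_glim_eq hf hre
  rw [h1, glim_eq_self (by simpa using hr')]

lemma graphOf_max_step (hf : IsGood Rᶜ f) {u x : V} (h : (GraphOf f).Adj u x)
    (hle : gsteps Rᶜ f x ≤ gsteps Rᶜ f u) : x = f u := by
  rcases graphOf_adj.1 h with ⟨hne, h1 | h2⟩
  · exact h1.symm
  · by_cases hx : x ∈ Rᶜ
    · have hs := gsteps_succ hf.2 hx
      rw [h2] at hs
      exact absurd hle (by omega)
    · rw [hf.1 x hx] at h2
      exact absurd h2.symm hne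

lemma graphOf_isAcyclic (hf : IsGood Rᶜ f) : (GraphOf f).IsAcyclic := by
  intro v c hc
  have hvmem : v ∈ c.support.toFinset := by simp [Walk.start_mem_support]
  obtain ⟨u, hu', hmax'⟩ := Finset.exists_max_image c.support.toFinset (gsteps Rᶜ f) ⟨v, hvmem⟩
  have hu : u ∈ c.support := List.mem_toFinset.1 hu'
  have hmax : ∀ x ∈ c.support, gsteps Rᶜ f x ≤ gsteps Rᶜ f u :=
    fun x hx => hmax' x (List.mem_toFinset.2 hx)
  have hc' : (c.rotate u hu).IsCycle := hc.rotate hu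
  have hsup : ∀ x ∈ (c.rotate u hu).support, gsteps Rᶜ f x ≤ gsteps Rᶜ f u := by
    intro x hx
    apply hmax
    rw [Walk.support_eq_cons (c.rotate u hu)] at hx
    rcases List.mem_cons.1 hx with rfl | hx'
    · exact hu
    · have hx2 : x ∈ c.support.tail := (Walk.support_rotate c u hu).mem_iff.1 hx'
      rw [Walk.support_eq_cons c]
      exact List.mem_cons_of_mem _ hx2
  obtain ⟨x, hadj, q, hq⟩ := Walk.not_nil_iff.1 hc'.not_nil
  have hnil2 : ¬ (c.rotate u hu).reverse.Nil := by
    rw [Walk.nil_iff_length_eq, Walk.length_reverse]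
    have := hc'.three_le_length
    omega
  obtain ⟨y, hadj2, q₂, hq₂⟩ := Walk.not_nil_iff.1 hnil2
  have hxmem : x ∈ (c.rotate u hu).support := by
    rw [hq, Walk.support_cons]
    exact List.mem_cons_of_mem _ q.start_mem_support
  have hymem : y ∈ (c.rotate u hu).support := by
    have : y ∈ (c.rotate u hu).reverse.support := by
      rw [hq₂, Walk.support_cons]
      exact List.mem_cons_of_mem _ q₂.start_mem_support
    rwa [Walk.support_reverse, List.mem_reverse] at this
  have hxfu : x = f u := graphOf_max_step hf hadj (hsup x hxmem)
  have hyfu : y = f u := graphOf_max_step hf hadj2 (hsup y hymem)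
  have hxy : y = x := by rw [hxfu, hyfu]
  subst hxy
  -- edge list contradiction
  have h1 : (c.rotate u hu).edges = s(u, y) :: q.edges := by rw [hq, Walk.edges_cons]
  have h2 : (c.rotate u hu).edges.reverse = s(u, y) :: q₂.edges := by
    rw [← Walk.edges_reverse, hq₂, Walk.edges_cons]
  have hlen : 3 ≤ (c.rotate u hu).length := hc'.three_le_length
  have hqlen : 2 ≤ q.length := by
    have : (c.rotate u hu).length = q.length + 1 := by rw [hq, Walk.length_cons]
    omega
  have hqenil : q.edges ≠ [] := by
    have : q.edges.length = q.length := Walk.length_edges q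
    intro h
    rw [h] at this
    simp at this
    omega
  have hrevnil : q.edges.reverse ≠ [] := by simpa using hqenil
  have h3 : s(u, y) :: q₂.edges = q.edges.reverse ++ [s(u, y)] := by
    rw [← h2, h1]
    simp
  have hmem : s(u, y) ∈ q.edges := by
    cases hqe : q.edges.reverse with
    | nil => exact absurd hqe hrevnil
    | cons a t =>
        rw [hqe, List.cons_append] at h3
        have ha : s(u, y) = a := (List.cons_eq_cons.mp h3).1
        have : a ∈ q.edges.reverse := by rw [hqe]; exact List.mem_cons_self
        rw [← ha] at this
        exact List.mem_reverse.1 this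
  have hnodup : ((c.rotate u hu).edges).Nodup := hc'.isCircuit.isTrail.edges_nodup
  rw [h1] at hnodup
  exact (List.nodup_cons.1 hnodup).1 hmem

lemma cast_walk_length {G G' : SimpleGraph V} {a b : V} (h : G = G') (w : G.Walk a b) :
    (h ▸ w : G'.Walk a b).length = w.length := by subst h; rfl

lemma exists_walk_gsteps (hf : IsGood Rᶜ f) (v : V) :
    ∃ w : (GraphOf f).Walk v (glim Rᶜ f v), w.length = gsteps Rᶜ f v := by
  have key : ∀ N v, gsteps Rᶜ f v ≤ N →
      ∃ w : (GraphOf f).Walk v (glim Rᶜ f v), w.length = gsteps Rᶜ f v := by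
    intro N
    induction N with
    | zero =>
        intro v hv
        by_cases h : v ∈ Rᶜ
        · exact absurd (gsteps_succ hf.2 h) (by omega)
        · exact ⟨Walk.nil.copy rfl (glim_eq_self h).symm, by simp [gsteps_eq_zero h]⟩
    | succ N ih =>
        intro v hv
        by_cases h : v ∈ Rᶜ
        · have hstep := gsteps_succ hf.2 h
          obtain ⟨w, hw⟩ := ih (f v) (by omega)
          refine ⟨Walk.cons (adj_apply hf h) (w.copy rfl (glim_f hf.2 hf.1 v)), ?_⟩
          rw [Walk.length_cons, Walk.length_copy, hw]
          omega
        · exact ⟨Walk.nil.copy rfl (glim_eq_self h).symm, by simp [gsteps_eq_zero h]⟩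
  exact key _ v le_rfl

lemma gsteps_le_walk (hf : IsGood Rᶜ f) {v x : V} (p : (GraphOf f).Walk v x) (hx : x ∈ R) :
    gsteps Rᶜ f v ≤ p.length := by
  revert hx
  induction p with
  | nil =>
      intro hx
      rw [gsteps_eq_zero (by simpa using hx)]
      exact Nat.zero_le _
  | @cons a b c hadj q ih =>
      intro hx
      have hih := ih hx
      rw [Walk.length_cons]
      rcases graphOf_adj.1 hadj with ⟨hne, h1 | h2⟩
      · by_cases h : a ∈ Rᶜ
        · have hs := gsteps_succ hf.2 h
          rw [h1] at hs
          omega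
        · rw [gsteps_eq_zero h]; omega
      · by_cases h : b ∈ Rᶜ
        · have hs := gsteps_succ hf.2 h
          rw [h2] at hs
          omega
        · rw [hf.1 b h] at h2
          exact absurd h2.symm hne

lemma gsteps_graph_eq {g : V → V} (hf : IsGood Rᶜ f) (hg : IsGood Rᶜ g)
    (heq : GraphOf f = GraphOf g) (v : V) : gsteps Rᶜ f v = gsteps Rᶜ g v := by
  have h1 : ∀ (f' g' : V → V), IsGood Rᶜ f' → IsGood Rᶜ g' → GraphOf f' = GraphOf g' →
      gsteps Rᶜ f' v ≤ gsteps Rᶜ g' v := by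
    intro f' g' hf' hg' heq'
    obtain ⟨w, hw⟩ := exists_walk_gsteps hg' v
    have hmem : glim Rᶜ g' v ∈ R := by simpa using glim_not_mem hg'.2 v
    have hle := gsteps_le_walk hf' (heq'.symm ▸ w) hmem
    rwa [cast_walk_length heq'.symm w, hw] at hle
  exact le_antisymm (h1 f g hf hg heq) (h1 g f hg hf heq.symm)

lemma graphOf_inj {g : V → V} (hf : IsGood Rᶜ f) (hg : IsGood Rᶜ g)
    (heq : GraphOf f = GraphOf g) : f = g := by
  funext v
  by_cases hv : v ∈ Rᶜ
  · have hst := gsteps_graph_eq hf hg heq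
    have hadj : (GraphOf g).Adj v (f v) := heq ▸ adj_apply hf hv
    rcases graphOf_adj.1 hadj with ⟨hne, h1 | h2⟩
    · exact h1.symm
    · by_cases hfv : f v ∈ Rᶜ
      · have e1 := gsteps_succ hg.2 hfv
        rw [h2] at e1
        have e2 := gsteps_succ hf.2 hv
        rw [hst v, hst (f v)] at e2
        exact absurd e1 (by omega)
      · rw [hg.1 (f v) hfv] at h2
        exact absurd h2 (apply_ne_self hf.2 hv)
  · rw [hf.1 v hv, hg.1 v hv]

lemma graphOf_surj (G : SimpleGraph V) (hG : G.IsAcyclic)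
    (huniq : ∀ v : V, ∃! r : V, r ∈ R ∧ G.Reachable v r) :
    ∃ f : V → V, IsGood Rᶜ f ∧ GraphOf f = G := by
  classical
  choose rt hrt using fun v => (huniq v).exists
  have hrtuniq : ∀ v r', r' ∈ R ∧ G.Reachable v r' → r' = rt v :=
    fun v r' h => (huniq v).unique h (hrt v)
  have hpath : ∀ v, ∃ q : G.Walk v (rt v), q.IsPath :=
    fun v => ⟨((hrt v).2.some).toPath.1, ((hrt v).2.some).toPath.2⟩
  choose p hp using hpath
  set F : V → V := fun v => if v ∈ R then v else (p v).getVert 1 with hF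
  have hrt_self : ∀ v ∈ R, rt v = v := fun v hv => (hrtuniq v v ⟨hv, Reachable.refl v⟩).symm
  have hGuniq := isAcyclic_iff_path_unique.mp hG
  have hpath_loop : ∀ {a : V} (q : G.Walk a a), q.IsPath → q.Nil := by
    intro a q hq
    cases q with
    | nil => simp
    | cons h q' =>
        rw [Walk.cons_isPath_iff] at hq
        exact absurd q'.end_mem_support hq.2
  have hpnil : ∀ v ∈ R, (p v).Nil := by
    intro v hv
    have hrv : rt v = v := hrt_self v hv
    have hcopy : ((p v).copy rfl hrv).IsPath := by rw [Walk.isPath_copy]; exact hp v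
    have hnil := hpath_loop _ hcopy
    rw [Walk.nil_iff_length_eq] at hnil ⊢
    simpa using hnil
  have hrt_adj : ∀ {v w : V}, G.Adj v w → rt v = rt w := by
    intro v w h
    exact hrtuniq w (rt v) ⟨(hrt v).1, h.symm.reachable.trans (hrt v).2⟩
  have hdecomp : ∀ v, v ∉ R →
      G.Adj v (F v) ∧ ∃ q : G.Walk (F v) (rt v), q.IsPath ∧ q.length + 1 = (p v).length := by
    intro v hv
    have hne : v ≠ rt v := fun h => hv (h ▸ (hrt v).1)
    obtain ⟨u, hadj, q, hq⟩ := Walk.not_nil_iff.1 (Walk.not_nil_of_ne (p := p v) hne)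
    have hFv : F v = u := by
      simp only [hF]
      rw [if_neg hv, hq, Walk.getVert_cons_succ, Walk.getVert_zero]
    have hqpath : q.IsPath ∧ v ∉ q.support := by
      have h2 := hp v
      rw [hq, Walk.cons_isPath_iff] at h2
      exact h2
    rw [hFv]
    exact ⟨hadj, q, hqpath.1, by rw [hq, Walk.length_cons]⟩
  have hlen_dec : ∀ v, v ∉ R → (p (F v)).length + 1 = (p v).length := by
    intro v hv
    obtain ⟨hadj, q, hqp, hqlen⟩ := hdecomp v hv
    have hrteq : rt v = rt (F v) := hrt_adj hadj
    have hq2 : (q.copy rfl hrteq).IsPath := by simpa using hqp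
    have heqp : (⟨q.copy rfl hrteq, hq2⟩ : G.Path (F v) (rt (F v))) = ⟨p (F v), hp (F v)⟩ :=
      hGuniq _ _
    have hval : q.copy rfl hrteq = p (F v) := congrArg Subtype.val heqp
    have hlq : (p (F v)).length = q.length := by rw [← hval, Walk.length_copy]
    omega
  have hFgood : IsGood Rᶜ F := by
    constructor
    · intro v hv
      simp only [hF]
      rw [if_pos (by simpa using hv)]
    · have key : ∀ N v, (p v).length ≤ N → ∃ j, F^[j] v ∉ Rᶜ := by
        intro N
        induction N with
        | zero =>
            intro v hv
            by_cases h : v ∈ R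
            · exact ⟨0, by simpa using h⟩
            · have := hlen_dec v h
              omega
        | succ N ih =>
            intro v hv
            by_cases h : v ∈ R
            · exact ⟨0, by simpa using h⟩
            · obtain ⟨j, hj⟩ := ih (F v) (by have := hlen_dec v h; omega)
              exact ⟨j + 1, by rwa [Function.iterate_succ_apply]⟩
      exact fun v => key _ v le_rfl
  refine ⟨F, hFgood, ?_⟩
  ext v w
  rw [graphOf_adj]
  constructor
  · rintro ⟨hne, h1 | h2⟩
    · by_cases hv : v ∈ R
      · rw [hF] at h1
        simp only [if_pos hv] at h1
        exact absurd h1 hne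
      · exact h1 ▸ (hdecomp v hv).1
    · by_cases hw : w ∈ R
      · rw [hF] at h2
        simp only [if_pos hw] at h2
        exact absurd h2.symm hne
      · exact (h2 ▸ (hdecomp w hw).1).symm
  · intro hadj
    refine ⟨hadj.ne, ?_⟩
    by_cases hw : w ∈ (p v).support
    · left
      have hv : v ∉ R := by
        intro hv
        have hnil := hpnil v hv
        rw [Walk.nil_iff_support_eq] at hnil
        rw [hnil] at hw
        simp at hw
        exact hadj.ne hw.symm
      have ht : ((p v).takeUntil w hw).IsPath := (hp v).takeUntil hw
      have hsingle : (Walk.cons hadj Walk.nil).IsPath := by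
        rw [Walk.cons_isPath_iff]
        exact ⟨Walk.IsPath.nil, by simpa using hadj.ne⟩
      have hteq : (⟨(p v).takeUntil w hw, ht⟩ : G.Path v w)
          = ⟨Walk.cons hadj Walk.nil, hsingle⟩ := hGuniq _ _
      have hteq' : (p v).takeUntil w hw = Walk.cons hadj Walk.nil := congrArg Subtype.val hteq
      have hspec := (p v).take_spec hw
      rw [hteq'] at hspec
      simp only [hF]
      rw [if_neg hv, ← hspec]
      simp [Walk.cons_append, Walk.getVert_cons_succ, Walk.getVert_zero]
    · right
      have hwR : w ∉ R := by
        intro hwR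
        have h1 : rt v = rt w := hrt_adj hadj
        have h2 : rt w = w := hrt_self w hwR
        have h3 : rt v ∈ (p v).support := (p v).end_mem_support
        apply hw
        rw [← h2, ← h1]
        exact h3
      have hq : (Walk.cons hadj.symm (p v)).IsPath := by
        rw [Walk.cons_isPath_iff]
        exact ⟨hp v, hw⟩
      have hrteq : rt v = rt w := hrt_adj hadj
      have hq2 : ((Walk.cons hadj.symm (p v)).copy rfl hrteq).IsPath := by simpa using hq
      have heqp : (⟨_, hq2⟩ : G.Path w (rt w)) = ⟨p w, hp w⟩ := hGuniq _ _
      have heqp' : (Walk.cons hadj.symm (p v)).copy rfl hrteq = p w := congrArg Subtype.val heqp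
      simp only [hF]
      rw [if_neg hwR, ← heqp', Walk.getVert_copy, Walk.getVert_cons_succ, Walk.getVert_zero]

end Graph

/-- The number of forests on vertex set `[n]` consisting of `k` rooted trees with a
prescribed root set `R` of size `k` (acyclic graphs on `Fin n` in which every vertex is
connected to exactly one root) equals `k · n^{n-k-1}`. -/
theorem stmt13 (n k : ℕ) (hkn : k < n) (R : Finset (Fin n)) (hR : R.card = k) :
    Nat.card {G : SimpleGraph (Fin n) //
        G.IsAcyclic ∧ ∀ v : Fin n, ∃! r : Fin n, r ∈ R ∧ G.Reachable v r} =
      k * n ^ (n - k - 1) := by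
  classical
  have e : {f : Fin n → Fin n // IsGood Rᶜ f} ≃
      {G : SimpleGraph (Fin n) //
        G.IsAcyclic ∧ ∀ v : Fin n, ∃! r : Fin n, r ∈ R ∧ G.Reachable v r} := by
    refine Equiv.ofBijective
      (fun f => ⟨GraphOf f.1, graphOf_isAcyclic f.2, graphOf_existsUnique f.2⟩) ⟨?_, ?_⟩
    · rintro ⟨f, hf⟩ ⟨g, hg⟩ h
      simp only [Subtype.mk.injEq] at h
      exact Subtype.ext (graphOf_inj hf hg h)
    · rintro ⟨G, hG, huniq⟩
      obtain ⟨f, hf, hfG⟩ := graphOf_surj G hG huniq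
      exact ⟨⟨f, hf⟩, Subtype.ext hfG⟩
  rw [← Nat.card_congr e]
  have hcompl : (Rᶜ : Finset (Fin n)).card = n - k := by
    rw [Finset.card_compl, hR, Fintype.card_fin]
  have hne : (Rᶜ : Finset (Fin n)).Nonempty := by
    rw [← Finset.card_pos, hcompl]; omega
  have hcount := card_GoodF_eq (V := Fin n) ((Rᶜ : Finset (Fin n)).card) Rᶜ rfl hne
  rw [hcompl, Fintype.card_fin] at hcount
  have hcard : Nat.card {f : Fin n → Fin n // IsGood Rᶜ f} = (GoodF Rᶜ).card := by
    rw [Nat.card_eq_fintype_card, GoodF, Fintype.card_subtype]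
  rw [hcard, hcount]
  congr 1
  omega
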